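/- Let γ₁ > 0 be the largest eigenvalue of X'X and suppose X'X + Δ'Δ = γ₁·I_p. Define the ordinary least squares OEM sequence by β^{(k+1)} = γ₁⁻¹·X'Y + (I_p − γ₁⁻¹·X'X)·β^{(k)}. If β^{(0)} lies in the column space of X' (the row space of X), then β^{(k)} converges as k → ∞ to β̂* = (X'X)⁺ X'Y, the Moore–Penrose least squares estimator; equivalently, β^{(k)} converges to the unique vector β* in the column space of X' satisfying X'Xβ* = X'Y. -/

import Mathlib

open Filter Topology Matrix

/-- Theorem 8, OLS OEM converges to the Moore–Penrose
least squares estimator.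
Let `γ₁ > 0` be the largest eigenvalue of `XᵀX` and suppose
`XᵀX + ΔᵀΔ = γ₁·I_p`.  Define the OLS OEM sequence by
`β⁽ᵏ⁺¹⁾ = γ₁⁻¹ XᵀY + (I_p − γ₁⁻¹ XᵀX) β⁽ᵏ⁾`.  If `β⁽⁰⁾` lies in the column
space of `Xᵀ`, then `β⁽ᵏ⁾` converges to `(XᵀX)⁺XᵀY`, i.e. to the unique
vector `β*` in the column space of `Xᵀ` satisfying the normal equations
`XᵀXβ* = XᵀY`. -/
theorem stmt11 {n m p : ℕ} (X : Matrix (Fin n) (Fin p) ℝ) (Y : Fin n → ℝ)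
    (Δ : Matrix (Fin m) (Fin p) ℝ) (γ1 : ℝ) (hγ1 : 0 < γ1)
    (hev : ∃ v : Fin p → ℝ, v ≠ 0 ∧ (Xᵀ * X).mulVec v = γ1 • v)
    (hmax : ∀ (μ : ℝ) (v : Fin p → ℝ), v ≠ 0 → (Xᵀ * X).mulVec v = μ • v → μ ≤ γ1)
    (hXΔ : Xᵀ * X + Δᵀ * Δ = γ1 • (1 : Matrix (Fin p) (Fin p) ℝ))
    (βs : ℕ → Fin p → ℝ)
    (hrec : ∀ k, βs (k + 1) =
      γ1⁻¹ • Xᵀ.mulVec Y + ((1 : Matrix (Fin p) (Fin p) ℝ) - γ1⁻¹ • (Xᵀ * X)).mulVec (βs k))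
    (h0 : βs 0 ∈ Set.range Xᵀ.mulVec) :
    ∃ bstar : Fin p → ℝ,
      bstar ∈ Set.range Xᵀ.mulVec ∧
      (Xᵀ * X).mulVec bstar = Xᵀ.mulVec Y ∧
      (∀ b : Fin p → ℝ, b ∈ Set.range Xᵀ.mulVec →
        (Xᵀ * X).mulVec b = Xᵀ.mulVec Y → b = bstar) ∧
      Tendsto βs atTop (𝓝 bstar) := by
  classical
  have hAh : (Xᵀ * X).IsHermitian := by simpa using Matrix.isHermitian_conjTranspose_mul_self X
  set A := Xᵀ * X with hAdef
  set b := hAh.eigenvectorBasis with hbdef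
  set μ : Fin p → ℝ := hAh.eigenvalues with hμdef
  set w : Fin p → (Fin p → ℝ) := fun i => ⇑(b i) with hwdef
  have hw_eig : ∀ i, A *ᵥ w i = μ i • w i := fun i => hAh.mulVec_eigenvectorBasis i
  -- key quadratic form identity
  have key : ∀ v : Fin p → ℝ, v ⬝ᵥ (A *ᵥ v) = (X *ᵥ v) ⬝ᵥ (X *ᵥ v) := by
    intro v
    rw [hAdef, ← Matrix.mulVec_mulVec, Matrix.dotProduct_mulVec, Matrix.vecMul_transpose]
  have hXnn : ∀ {q : ℕ} (v : Fin q → ℝ), 0 ≤ v ⬝ᵥ v :=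
    fun v => Finset.sum_nonneg fun j _ => mul_self_nonneg _
  -- injectivity on the row space
  have hrange0 : ∀ v ∈ Set.range Xᵀ.mulVec, X *ᵥ v = 0 → v = 0 := by
    rintro v ⟨u, rfl⟩ hv
    have h : (Xᵀ *ᵥ u) ⬝ᵥ (Xᵀ *ᵥ u) = 0 := by
      rw [Matrix.dotProduct_mulVec, Matrix.vecMul_transpose, hv, zero_dotProduct]
    exact dotProduct_self_eq_zero.mp h
  -- the range is closed under subtraction
  have hsubmem : ∀ v₁ ∈ Set.range Xᵀ.mulVec, ∀ v₂ ∈ Set.range Xᵀ.mulVec,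
      v₁ - v₂ ∈ Set.range Xᵀ.mulVec := by
    rintro v₁ ⟨u₁, rfl⟩ v₂ ⟨u₂, rfl⟩
    exact ⟨u₁ - u₂, Matrix.mulVec_sub _ _ _⟩
  -- eigenvector facts
  have hwne : ∀ i, w i ≠ 0 := by
    intro i h
    have hb : b i = 0 := by ext j; exact congrFun h j
    have hne := b.toBasis.ne_zero i
    rw [OrthonormalBasis.coe_toBasis] at hne
    exact hne hb
  have hds : ∀ i, 0 < w i ⬝ᵥ w i := by
    intro i
    refine lt_of_le_of_ne (hXnn _) (Ne.symm ?_)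
    exact fun h => hwne i (dotProduct_self_eq_zero.mp h)
  have hμ0 : ∀ i, 0 ≤ μ i := by
    intro i
    have h := key (w i)
    rw [hw_eig i, dotProduct_smul, smul_eq_mul] at h
    have h2 : 0 ≤ (X *ᵥ w i) ⬝ᵥ (X *ᵥ w i) := hXnn (X *ᵥ w i)
    have h3 := hds i
    nlinarith [h, h2, h3]
  have hμγ : ∀ i, μ i ≤ γ1 := fun i => hmax (μ i) (w i) (hwne i) (hw_eig i)
  have hker : ∀ i, μ i = 0 → ∀ v ∈ Set.range Xᵀ.mulVec, w i ⬝ᵥ v = 0 := by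
    intro i hi v hv
    have hX : X *ᵥ w i = 0 := by
      have h := key (w i)
      rw [hw_eig i, hi, zero_smul, dotProduct_zero] at h
      exact dotProduct_self_eq_zero.mp h.symm
    obtain ⟨u, rfl⟩ := hv
    rw [Matrix.dotProduct_mulVec, Matrix.vecMul_transpose, hX, zero_dotProduct]
  -- orthonormal decomposition, expressed with dot products
  have hdecomp : ∀ v : Fin p → ℝ, ∑ i, (w i ⬝ᵥ v) • w i = v := by
    intro v
    have h := b.sum_repr' ((WithLp.equiv 2 (Fin p → ℝ)).symm v)
    have h2 : ∀ i, (inner ℝ (b i) ((WithLp.equiv 2 (Fin p → ℝ)).symm v) : ℝ) = w i ⬝ᵥ v := by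
      intro i
      simp [PiLp.inner_apply, RCLike.inner_apply, dotProduct, hwdef, mul_comm]
    calc ∑ i, (w i ⬝ᵥ v) • w i
        = ⇑(∑ i, (inner ℝ (b i) ((WithLp.equiv 2 (Fin p → ℝ)).symm v) : ℝ) • b i) := by
          rw [show (⇑(∑ i, (inner ℝ (b i) ((WithLp.equiv 2 (Fin p → ℝ)).symm v) : ℝ) • b i)
              : Fin p → ℝ)
            = ∑ i, (inner ℝ (b i) ((WithLp.equiv 2 (Fin p → ℝ)).symm v) : ℝ) • w i from by simp [hwdef]]
          exact Finset.sum_congr rfl fun i _ => by rw [h2 i]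
      _ = v := by rw [h]; rfl
  -- linearity of mulVec over sums
  have hsum : ∀ (M : Matrix (Fin p) (Fin p) ℝ) (f : Fin p → (Fin p → ℝ)),
      M *ᵥ (∑ i, f i) = ∑ i, M *ᵥ f i := by
    intro M f
    exact map_sum M.mulVecLin f Finset.univ
  set g := Xᵀ *ᵥ Y with hg
  have hgmem : g ∈ Set.range Xᵀ.mulVec := ⟨Y, rfl⟩
  set d : Fin p → ℝ := fun i => if μ i = 0 then 0 else (w i ⬝ᵥ g) / μ i with hd
  set bstar := ∑ i, d i • w i with hbstar
  -- bstar lies in the range of Xᵀ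
  have hbmem : bstar ∈ Set.range Xᵀ.mulVec := by
    refine ⟨X *ᵥ (∑ i, (if μ i = 0 then 0 else (w i ⬝ᵥ g) / (μ i * μ i)) • w i), ?_⟩
    rw [Matrix.mulVec_mulVec, ← hAdef, hsum, hbstar]
    refine Finset.sum_congr rfl fun i _ => ?_
    rw [Matrix.mulVec_smul, hw_eig i, hd]
    by_cases hi : μ i = 0
    · simp [hi]
    · simp only [hi, if_false, smul_smul]
      congr 1
      field_simp
  -- bstar satisfies the normal equations
  have hbeq : A *ᵥ bstar = g := by
    rw [hbstar, hsum]
    have : ∀ i, A *ᵥ (d i • w i) = (w i ⬝ᵥ g) • w i := by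
      intro i
      rw [Matrix.mulVec_smul, hw_eig i, smul_smul, hd]
      by_cases hi : μ i = 0
      · simp [hi, hker i hi g hgmem]
      · simp only [hi, if_false]
        congr 1
        field_simp
    rw [Finset.sum_congr rfl fun i _ => this i]
    exact hdecomp g
  -- uniqueness
  have huniq : ∀ b' ∈ Set.range Xᵀ.mulVec, A *ᵥ b' = g → b' = bstar := by
    intro b' hb' hb'eq
    have hsub : b' - bstar ∈ Set.range Xᵀ.mulVec := hsubmem _ hb' _ hbmem
    have hA0 : A *ᵥ (b' - bstar) = 0 := by
      rw [Matrix.mulVec_sub, hb'eq, hbeq, sub_self]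
    have hX0 : X *ᵥ (b' - bstar) = 0 := by
      have h := key (b' - bstar)
      rw [hA0, dotProduct_zero] at h
      exact dotProduct_self_eq_zero.mp h.symm
    have := hrange0 _ hsub hX0
    exact sub_eq_zero.mp this
  refine ⟨bstar, hbmem, hbeq, fun b' hb' heq => huniq b' hb' heq, ?_⟩
  -- the error sequence
  set e : ℕ → Fin p → ℝ := fun k => βs k - bstar with he
  have he0mem : e 0 ∈ Set.range Xᵀ.mulVec := hsubmem _ h0 _ hbmem
  have hestep : ∀ k, e (k + 1) = e k - γ1⁻¹ • (A *ᵥ e k) := by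
    intro k
    have hM : ((1 : Matrix (Fin p) (Fin p) ℝ) - γ1⁻¹ • A) *ᵥ (βs k)
        = βs k - γ1⁻¹ • (A *ᵥ βs k) := by
      rw [Matrix.sub_mulVec, Matrix.one_mulVec, Matrix.smul_mulVec]
    have hAe : A *ᵥ e k = A *ᵥ βs k - g := by
      rw [he]; rw [Matrix.mulVec_sub, hbeq]
    rw [he]
    simp only []
    rw [hrec k, hM, hAe]
    funext j
    simp only [Pi.add_apply, Pi.sub_apply, Pi.smul_apply, smul_eq_mul]
    ring
  set r : Fin p → ℝ := fun i => 1 - μ i / γ1 with hr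
  set c : Fin p → ℝ := fun i => w i ⬝ᵥ e 0 with hc
  have hclosed : ∀ k, e k = ∑ i, (r i ^ k * c i) • w i := by
    intro k
    induction k with
    | zero =>
      simp only [pow_zero, one_mul]
      exact (hdecomp (e 0)).symm
    | succ k ih =>
      rw [hestep k, ih, hsum, Finset.smul_sum, ← Finset.sum_sub_distrib]
      refine Finset.sum_congr rfl fun i _ => ?_
      rw [Matrix.mulVec_smul, hw_eig i, smul_smul, smul_smul, ← sub_smul]
      congr 1
      have : r i ^ (k + 1) = r i ^ k * r i := pow_succ _ _
      rw [this, hr]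
      field_simp
  have hconv : Tendsto e atTop (𝓝 0) := by
    have h1 : Tendsto (fun k => ∑ i, (r i ^ k * c i) • w i) atTop
        (𝓝 (∑ i : Fin p, (0 : Fin p → ℝ))) := by
      refine tendsto_finset_sum _ fun i _ => ?_
      by_cases hi : μ i = 0
      · have hci : c i = 0 := hker i hi (e 0) he0mem
        simp only [hci, mul_zero, zero_smul]
        exact tendsto_const_nhds
      · have h0r : 0 ≤ r i := by
          have : μ i / γ1 ≤ 1 := (div_le_one hγ1).mpr (hμγ i)
          simp only [hr]; linarith
        have h1r : r i < 1 := by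
          have : 0 < μ i / γ1 := div_pos (lt_of_le_of_ne (hμ0 i) (Ne.symm hi)) hγ1
          simp only [hr]; linarith
        have h2 := (tendsto_pow_atTop_nhds_zero_of_lt_one h0r h1r).mul_const (c i)
        have h3 := h2.smul_const (w i)
        simpa using h3
    rw [funext hclosed]
    simpa using h1
  have h2 := hconv.add_const bstar
  simp only [zero_add] at h2
  have h3 : (fun k => e k + bstar) = βs := by funext k; simp [he]
  rwa [h3] at h2
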